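/- Let K be a field, Ω a set, and Ω₁ ⊆ Ω a nonempty subset whose complement Ω \ Ω₁ is finite. Suppose given, for each v ∈ Ω, an absolute value |·|_v on K and a positive integer N_v satisfying the product formula: for every x ∈ K \ {0}, the set {v ∈ Ω : |x|_v ≠ 1} is finite and ∏_{v ∈ Ω, |x|_v ≠ 1} |x|_v^{N_v} = 1. Let (x_n)_{n∈ℕ} be a sequence in K such that (a) |x_n|_v ≤ 1 for every v ∈ Ω₁ and every n, (b) for every v ∈ Ω₁, |x_n|_v → 0 as n → ∞, and (c) for every v ∈ Ω \ Ω₁ the sequence (|x_n|_v)_{n∈ℕ} is bounded above. Then x_n = 0 for all sufficiently large n. -/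
import Mathlib


open Filter Topology

/-- Let `K` be a field, `Ω` a set (here: a type), `Ω₁ ⊆ Ω` nonempty with
finite complement.  Given absolute values `|·|_v` and positive integers `N_v` for `v ∈ Ω`
satisfying the product formula, any sequence `(xₙ)` in `K` which is integral at all
`v ∈ Ω₁`, tends to `0` at every `v ∈ Ω₁`, and has bounded absolute values at the finitely
many `v ∉ Ω₁`, is eventually equal to `0`. -/
theorem stmt0 {K : Type*} [Field K] {Ω : Type*} (Ω₁ : Set Ω)
    (hΩ₁ne : Ω₁.Nonempty) (hΩ₁cof : Ω₁ᶜ.Finite)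
    (v : Ω → AbsoluteValue K ℝ) (N : Ω → ℕ) (hNpos : ∀ w, 0 < N w)
    (hfin : ∀ x : K, x ≠ 0 → {w : Ω | v w x ≠ 1}.Finite)
    (hprod : ∀ x : K, x ≠ 0 → ∏ᶠ w : Ω, (v w x) ^ (N w) = 1)
    (x : ℕ → K)
    (ha : ∀ w ∈ Ω₁, ∀ n : ℕ, v w (x n) ≤ 1)
    (hb : ∀ w ∈ Ω₁, Tendsto (fun n => v w (x n)) atTop (𝓝 0))
    (hc : ∀ w ∉ Ω₁, ∃ C : ℝ, ∀ n : ℕ, v w (x n) ≤ C) :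
    ∃ N₀ : ℕ, ∀ n ≥ N₀, x n = 0 := by
  classical
  obtain ⟨w₀, hw₀⟩ := hΩ₁ne
  choose Cb hCb using hc
  set S := hΩ₁cof.toFinset with hS
  set D : Ω → ℝ := fun w => if h : w ∉ Ω₁ then (max (Cb w h) 1) ^ (N w) else 1 with hD
  have hD1 : ∀ w, 1 ≤ D w := by
    intro w
    by_cases h : w ∉ Ω₁
    · simp only [hD, dif_pos h]
      exact (one_le_pow_iff_of_nonneg (le_trans zero_le_one (le_max_right _ _))
        (hNpos w).ne').mpr (le_max_right _ _)
    · simp only [hD, dif_neg h]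
      exact le_rfl
  have hDbound : ∀ w, ∀ h : w ∉ Ω₁, ∀ n, (v w (x n)) ^ (N w) ≤ D w := by
    intro w h n
    simp only [hD, dif_pos h]
    exact pow_le_pow_left₀ (AbsoluteValue.nonneg _ _)
      (le_trans (hCb w h n) (le_max_left _ _)) _
  set C := ∏ w ∈ S, D w with hC
  have hC1 : (1 : ℝ) ≤ C := by
    calc (1 : ℝ) = ∏ _w ∈ S, (1 : ℝ) := (Finset.prod_const_one).symm
      _ ≤ ∏ w ∈ S, D w :=
        Finset.prod_le_prod (fun _ _ => zero_le_one) (fun w _ => hD1 w)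
  have hCpos : (0 : ℝ) < C := lt_of_lt_of_le one_pos hC1
  set ε := (2 * C)⁻¹ with hε
  have hεpos : 0 < ε := by positivity
  have hεle1 : ε ≤ 1 := by
    rw [hε]
    rw [inv_le_one_iff₀]
    right; linarith
  have hev : ∀ᶠ n in atTop, v w₀ (x n) < ε := (hb w₀ hw₀).eventually (gt_mem_nhds hεpos)
  obtain ⟨N₀, hN₀⟩ := eventually_atTop.mp hev
  refine ⟨N₀, fun n hn => ?_⟩
  by_contra hxn
  have hprodn := hprod (x n) hxn
  set f : Ω → ℝ := fun w => (v w (x n)) ^ (N w) with hf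
  set T : Finset Ω := ((hfin (x n) hxn).toFinset ∪ S) ∪ {w₀} with hT
  have hsupp : Function.mulSupport f ⊆ (T : Set Ω) := by
    intro w hw
    have : v w (x n) ≠ 1 := by
      intro h
      apply hw
      simp [hf, h]
    simp only [hT, Finset.coe_union, Set.mem_union, Finset.coe_singleton]
    left; left
    simpa using this
  have key : (1 : ℝ) = ∏ w ∈ T, f w := by
    rw [← finprod_eq_finset_prod_of_mulSupport_subset f hsupp]
    exact hprodn.symm
  rw [← Finset.prod_filter_mul_prod_filter_not T (· ∈ Ω₁) f] at key
  have hw₀T : w₀ ∈ T.filter (· ∈ Ω₁) := by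
    refine Finset.mem_filter.mpr ⟨?_, hw₀⟩
    exact Finset.mem_union_right _ (Finset.mem_singleton_self w₀)
  have h1 : ∏ w ∈ T.filter (· ∈ Ω₁), f w ≤ f w₀ := by
    rw [← Finset.mul_prod_erase _ f hw₀T]
    have hle1 : ∏ w ∈ (T.filter (· ∈ Ω₁)).erase w₀, f w ≤ 1 := by
      apply Finset.prod_le_one
      · intro w _
        exact pow_nonneg (AbsoluteValue.nonneg _ _) _
      · intro w hw
        have hwΩ₁ : w ∈ Ω₁ := (Finset.mem_filter.mp (Finset.mem_of_mem_erase hw)).2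
        exact pow_le_one₀ (AbsoluteValue.nonneg _ _) (ha w hwΩ₁ n)
    have hfw₀ : 0 ≤ f w₀ := pow_nonneg (AbsoluteValue.nonneg _ _) _
    calc f w₀ * ∏ w ∈ (T.filter (· ∈ Ω₁)).erase w₀, f w ≤ f w₀ * 1 :=
          mul_le_mul_of_nonneg_left hle1 hfw₀
      _ = f w₀ := mul_one _
  have h2 : ∏ w ∈ T.filter (¬ · ∈ Ω₁), f w ≤ C := by
    have hsub : T.filter (¬ · ∈ Ω₁) ⊆ S := by
      intro w hw
      have := (Finset.mem_filter.mp hw).2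
      simp only [hS, Set.Finite.mem_toFinset, Set.mem_compl_iff]
      exact this
    calc ∏ w ∈ T.filter (¬ · ∈ Ω₁), f w ≤ ∏ w ∈ T.filter (¬ · ∈ Ω₁), D w := by
          apply Finset.prod_le_prod
          · intro w _
            exact pow_nonneg (AbsoluteValue.nonneg _ _) _
          · intro w hw
            exact hDbound w (Finset.mem_filter.mp hw).2 n
      _ ≤ ∏ w ∈ S, D w := by
          rw [← Finset.prod_sdiff hsub]
          have h1' : (1 : ℝ) ≤ ∏ w ∈ S \ T.filter (¬ · ∈ Ω₁), D w := by
            calc (1 : ℝ) = ∏ _w ∈ S \ T.filter (¬ · ∈ Ω₁), (1 : ℝ) :=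
                  (Finset.prod_const_one).symm
              _ ≤ _ := Finset.prod_le_prod (fun _ _ => zero_le_one) (fun w _ => hD1 w)
          have hnn : 0 ≤ ∏ w ∈ T.filter (¬ · ∈ Ω₁), D w :=
            Finset.prod_nonneg fun w _ => le_trans zero_le_one (hD1 w)
          exact le_mul_of_one_le_left hnn h1'
      _ = C := rfl
  have hfw₀ε : f w₀ ≤ ε := by
    have h3 : v w₀ (x n) ≤ ε := (hN₀ n hn).le
    calc f w₀ = (v w₀ (x n)) ^ (N w₀) := rfl
      _ ≤ ε ^ (N w₀) := pow_le_pow_left₀ (AbsoluteValue.nonneg _ _) h3 _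
      _ ≤ ε ^ 1 := pow_le_pow_of_le_one hεpos.le hεle1 (hNpos w₀)
      _ = ε := pow_one _
  have hfilnn : 0 ≤ ∏ w ∈ T.filter (¬ · ∈ Ω₁), f w :=
    Finset.prod_nonneg fun w _ => pow_nonneg (AbsoluteValue.nonneg _ _) _
  have hfil1nn : 0 ≤ ∏ w ∈ T.filter (· ∈ Ω₁), f w :=
    Finset.prod_nonneg fun w _ => pow_nonneg (AbsoluteValue.nonneg _ _) _
  have hfin' : (1 : ℝ) ≤ ε * C := by
    calc (1 : ℝ) = (∏ w ∈ T.filter (· ∈ Ω₁), f w) * ∏ w ∈ T.filter (¬ · ∈ Ω₁), f w := key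
      _ ≤ (f w₀) * C := by
          apply mul_le_mul h1 h2 hfilnn
          exact le_trans (pow_nonneg (AbsoluteValue.nonneg _ _) _)
            (le_of_eq rfl)
      _ ≤ ε * C := mul_le_mul_of_nonneg_right hfw₀ε hCpos.le
  rw [hε] at hfin'
  have h2C : (2 * C)⁻¹ * C = 2⁻¹ := by
    rw [mul_inv, mul_assoc, inv_mul_cancel₀ hCpos.ne', mul_one]
  rw [h2C] at hfin'
  norm_num at hfin'
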